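/- Difference form of the causally conditioned directed information under a causal Markov constraint: Let (x_t, y_t, w_t), t = 1, ..., T, be random variables taking values in finite sets such that for every t the pair (y^t, x^{t-1}) is conditionally independent of w_t given (x^t, w^{t-1}). Then Σ_{t=1}^T I[x^t; w_t | (w^{t-1}, y^t)] = Σ_{t=1}^T I[x^t; w_t | w^{t-1}] − Σ_{t=1}^T I[y^t; w_t | w^{t-1}], i.e., I(x^T → w^T ‖ y^T) = I(x^T → w^T) − I(y^T → w^T). -/

import Mathlib

open MeasureTheory ProbabilityTheory Finset

/-- Shannon entropy (base 2) of a random variable with values in a finite type. -/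
noncomputable def shEnt {Ω : Type*} [MeasurableSpace Ω] {S : Type*} [Fintype S]
    (μ : Measure Ω) (X : Ω → S) : ℝ :=
  -∑ s : S, ((μ (X ⁻¹' {s})).toReal * Real.logb 2 (μ (X ⁻¹' {s})).toReal)

/-- Mutual information (base 2). -/
noncomputable def mutInf {Ω : Type*} [MeasurableSpace Ω] {S T : Type*} [Fintype S] [Fintype T]
    (μ : Measure Ω) (X : Ω → S) (Y : Ω → T) : ℝ :=
  shEnt μ X + shEnt μ Y - shEnt μ (fun ω => (X ω, Y ω))

/-- Conditional mutual information (base 2), `I[X ; Y | Z]`. -/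
noncomputable def condMutInf {Ω : Type*} [MeasurableSpace Ω] {S T U : Type*}
    [Fintype S] [Fintype T] [Fintype U]
    (μ : Measure Ω) (X : Ω → S) (Y : Ω → T) (Z : Ω → U) : ℝ :=
  shEnt μ (fun ω => (X ω, Z ω)) + shEnt μ (fun ω => (Y ω, Z ω))
    - shEnt μ (fun ω => (X ω, Y ω, Z ω)) - shEnt μ Z

/-- The history `a^t = (a_1, …, a_t)` of a process (0-indexed: the first `t` variables). -/
def hist {Ω : Type*} {α : ℕ → Type*} (x : (i : ℕ) → Ω → α i) (t : ℕ) :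
    Ω → ((i : Fin t) → α i) :=
  fun ω i => x i ω

theorem hist_measurable {Ω : Type*} [MeasurableSpace Ω] {α : ℕ → Type*}
    [∀ i, MeasurableSpace (α i)]
    (x : (i : ℕ) → Ω → α i) (hx : ∀ i, Measurable (x i)) (t : ℕ) :
    Measurable (hist x t) :=
  measurable_pi_lambda _ fun j => hx j

section Helpers

variable {Ω : Type*} [MeasurableSpace Ω] (μ : Measure Ω)

lemma shEnt_comp_inj {S T : Type*} [Fintype S] [Fintype T] [DecidableEq T]
    (g : S → T) (hg : Function.Injective g) (X : Ω → S) :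
    shEnt μ (fun ω => g (X ω)) = shEnt μ X := by
  unfold shEnt
  congr 1
  set F : T → ℝ := fun t => ((μ ((fun ω => g (X ω)) ⁻¹' {t})).toReal *
      Real.logb 2 (μ ((fun ω => g (X ω)) ⁻¹' {t})).toReal) with hF
  have hzero : ∀ t ∉ Finset.image g Finset.univ, F t = 0 := by
    intro t ht
    have : (fun ω => g (X ω)) ⁻¹' {t} = ∅ := by
      ext ω
      simp only [Set.mem_preimage, Set.mem_singleton_iff, Set.mem_empty_iff_false, iff_false]
      intro h
      exact ht (Finset.mem_image.mpr ⟨X ω, Finset.mem_univ _, h⟩)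
    simp [hF, this]
  calc ∑ t : T, F t = ∑ t ∈ Finset.image g Finset.univ, F t :=
        (Finset.sum_subset (Finset.subset_univ _) (fun t _ ht => hzero t ht)).symm
    _ = ∑ s : S, F (g s) := Finset.sum_image (fun a _ b _ h => hg h)
    _ = _ := by
        refine Finset.sum_congr rfl fun s _ => ?_
        have : (fun ω => g (X ω)) ⁻¹' {g s} = X ⁻¹' {s} := by
          ext ω; simp [hg.eq_iff]
        simp only [hF, this]

/-- marginal of a pmf along `g` -/
noncomputable def mar {S T : Type*} [Fintype S] [DecidableEq T]
    (g : S → T) (p : S → ℝ) (t : T) : ℝ :=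
  ∑ s ∈ Finset.univ.filter (fun s => g s = t), p s

lemma mar_id {S : Type*} [Fintype S] [DecidableEq S] (p : S → ℝ) (s : S) :
    mar id p s = p s := by
  simp [mar, Finset.filter_eq']

lemma mar_eq [IsProbabilityMeasure μ] {S T : Type*} [Fintype S] [DecidableEq T]
    [MeasurableSpace S] [MeasurableSingletonClass S]
    {X : Ω → S} (hX : Measurable X) (g : S → T) (t : T) :
    (μ ((fun ω => g (X ω)) ⁻¹' {t})).toReal
      = mar g (fun s => (μ (X ⁻¹' {s})).toReal) t := by
  have hset : (fun ω => g (X ω)) ⁻¹' {t}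
      = ⋃ s ∈ Finset.univ.filter (fun s => g s = t), X ⁻¹' {s} := by
    ext ω
    simp only [Set.mem_preimage, Set.mem_singleton_iff, Set.mem_iUnion, Finset.mem_filter,
      Finset.mem_univ, true_and]
    exact ⟨fun h => ⟨X ω, h, rfl⟩, fun ⟨s, hs, hXs⟩ => by rw [hXs]; exact hs⟩
  rw [hset, measure_biUnion_finset ?_ (fun s _ => hX (measurableSet_singleton s)),
    ENNReal.toReal_sum (fun s _ => measure_ne_top μ _)]
  · rfl
  · intro s _ s' _ hne
    refine Set.disjoint_left.mpr fun ω h1 h2 => hne ?_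
    simp only [Set.mem_preimage, Set.mem_singleton_iff] at h1 h2
    rw [← h1, ← h2]

lemma sum_mar_mul {S T : Type*} [Fintype S] [Fintype T] [DecidableEq T]
    (g : S → T) (p : S → ℝ) (F : T → ℝ) :
    ∑ t : T, mar g p t * F t = ∑ s : S, p s * F (g s) := by
  unfold mar
  rw [← Finset.sum_fiberwise_of_maps_to (fun s _ => Finset.mem_univ (g s))
    (fun s => p s * F (g s))]
  refine Finset.sum_congr rfl fun t _ => ?_
  rw [Finset.sum_mul]
  refine Finset.sum_congr rfl fun s hs => ?_
  rw [(Finset.mem_filter.mp hs).2]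

lemma shEnt_comp_eq [IsProbabilityMeasure μ] {S T : Type*} [Fintype S] [Fintype T] [DecidableEq T]
    [MeasurableSpace S] [MeasurableSingletonClass S]
    {X : Ω → S} (hX : Measurable X) (g : S → T) :
    shEnt μ (fun ω => g (X ω))
      = -∑ s : S, (μ (X ⁻¹' {s})).toReal *
          Real.logb 2 (mar g (fun s => (μ (X ⁻¹' {s})).toReal) (g s)) := by
  unfold shEnt
  congr 1
  calc ∑ t : T, (μ ((fun ω => g (X ω)) ⁻¹' {t})).toReal *
        Real.logb 2 (μ ((fun ω => g (X ω)) ⁻¹' {t})).toReal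
      = ∑ t : T, mar g (fun s => (μ (X ⁻¹' {s})).toReal) t *
          Real.logb 2 (mar g (fun s => (μ (X ⁻¹' {s})).toReal) t) := by
        refine Finset.sum_congr rfl fun t _ => ?_
        rw [mar_eq μ hX g t]
    _ = _ := sum_mar_mul g _ _

end Helpers


lemma condexp_comap_const_on_fiber {Ω Z' : Type*} [MeasurableSpace Ω] [MeasurableSpace Z']
    {Z : Ω → Z'} {h : Ω → ℝ}
    (hh : Measurable[MeasurableSpace.comap Z inferInstance] h)
    {ω₁ ω₂ : Ω} (hz : Z ω₁ = Z ω₂) : h ω₁ = h ω₂ := by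
  obtain ⟨B, hB, hBeq⟩ := hh (measurableSet_singleton (h ω₁))
  have h1 : ω₁ ∈ Z ⁻¹' B := by rw [hBeq]; exact rfl
  have h2 : ω₂ ∈ Z ⁻¹' B := by
    simpa only [Set.mem_preimage, ← hz] using h1
  rw [hBeq] at h2
  exact (Set.mem_singleton_iff.mp h2).symm

lemma ci_measure {Ω : Type*} [mΩ : MeasurableSpace Ω] [StandardBorelSpace Ω]
    (μ : Measure Ω) [IsProbabilityMeasure μ]
    {Z' B' D' : Type*} [MeasurableSpace Z'] [MeasurableSpace B'] [MeasurableSpace D']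
    [MeasurableSingletonClass Z']
    {Z : Ω → Z'} {fB : Ω → B'} {fD : Ω → D'}
    (hZ : Measurable Z) (hB : Measurable fB) (hD : Measurable fD)
    (hCI : CondIndepFun (MeasurableSpace.comap Z inferInstance) hZ.comap_le fB fD μ)
    {b : Set B'} {d : Set D'} (hb : MeasurableSet b) (hd : MeasurableSet d) (z : Z') :
    (μ (fB ⁻¹' b ∩ fD ⁻¹' d ∩ Z ⁻¹' {z})).toReal * (μ (Z ⁻¹' {z})).toReal
      = (μ (fB ⁻¹' b ∩ Z ⁻¹' {z})).toReal * (μ (fD ⁻¹' d ∩ Z ⁻¹' {z})).toReal := by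
  have hm : MeasurableSpace.comap Z inferInstance ≤ mΩ := hZ.comap_le
  have hEm : MeasurableSet[MeasurableSpace.comap Z inferInstance] (Z ⁻¹' {z}) :=
    ⟨{z}, measurableSet_singleton z, rfl⟩
  have hE : MeasurableSet (Z ⁻¹' {z}) := hm _ hEm
  by_cases hμE : μ (Z ⁻¹' {z}) = 0
  · have l1 : μ (fB ⁻¹' b ∩ fD ⁻¹' d ∩ Z ⁻¹' {z}) = 0 :=
      measure_mono_null Set.inter_subset_right hμE
    have l2 : μ (fB ⁻¹' b ∩ Z ⁻¹' {z}) = 0 := measure_mono_null Set.inter_subset_right hμE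
    simp [l1, l2, hμE]
  · have hne : (Z ⁻¹' {z}).Nonempty := by
      rw [Set.nonempty_iff_ne_empty]
      intro h; exact hμE (by simp [h])
    obtain ⟨ω₀, hω₀⟩ := hne
    have key := (condIndepFun_iff_condExp_inter_preimage_eq_mul hB hD).mp hCI b d hb hd
    set h1 : Ω → ℝ := (μ⟦fB ⁻¹' b | MeasurableSpace.comap Z inferInstance⟧) with hh1
    set h2 : Ω → ℝ := (μ⟦fD ⁻¹' d | MeasurableSpace.comap Z inferInstance⟧) with hh2
    set h12 : Ω → ℝ :=
      (μ⟦fB ⁻¹' b ∩ fD ⁻¹' d | MeasurableSpace.comap Z inferInstance⟧) with hh12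
    have hzfix : ∀ ω ∈ Z ⁻¹' {z}, Z ω = Z ω₀ := fun ω hω =>
      (Set.mem_singleton_iff.mp hω).trans (Set.mem_singleton_iff.mp hω₀).symm
    have hc1 : ∀ ω ∈ Z ⁻¹' {z}, h1 ω = h1 ω₀ := fun ω hω =>
      condexp_comap_const_on_fiber stronglyMeasurable_condExp.measurable (hzfix ω hω)
    have hc2 : ∀ ω ∈ Z ⁻¹' {z}, h2 ω = h2 ω₀ := fun ω hω =>
      condexp_comap_const_on_fiber stronglyMeasurable_condExp.measurable (hzfix ω hω)
    have int1 : ∀ (S : Set Ω), MeasurableSet S →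
        ∫ ω in Z ⁻¹' {z}, (μ⟦S | MeasurableSpace.comap Z inferInstance⟧) ω ∂μ
          = (μ (S ∩ Z ⁻¹' {z})).toReal := by
      intro S hS
      rw [setIntegral_condExp hm ((integrable_const (1:ℝ)).indicator hS) hEm,
        setIntegral_indicator hS, setIntegral_const]
      simp [Set.inter_comm]; rfl
    have i1 : ∫ ω in Z ⁻¹' {z}, h1 ω ∂μ = (μ (fB ⁻¹' b ∩ Z ⁻¹' {z})).toReal := int1 _ (hB hb)
    have i2 : ∫ ω in Z ⁻¹' {z}, h2 ω ∂μ = (μ (fD ⁻¹' d ∩ Z ⁻¹' {z})).toReal := int1 _ (hD hd)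
    have i12 : ∫ ω in Z ⁻¹' {z}, h12 ω ∂μ
        = (μ (fB ⁻¹' b ∩ fD ⁻¹' d ∩ Z ⁻¹' {z})).toReal := int1 _ ((hB hb).inter (hD hd))
    have c1 : ∫ ω in Z ⁻¹' {z}, h1 ω ∂μ = h1 ω₀ * (μ (Z ⁻¹' {z})).toReal := by
      rw [setIntegral_congr_fun hE (fun ω hω => hc1 ω hω), setIntegral_const]
      rw [smul_eq_mul, measureReal_def]; ring
    have c2 : ∫ ω in Z ⁻¹' {z}, h2 ω ∂μ = h2 ω₀ * (μ (Z ⁻¹' {z})).toReal := by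
      rw [setIntegral_congr_fun hE (fun ω hω => hc2 ω hω), setIntegral_const]
      rw [smul_eq_mul, measureReal_def]; ring
    have c12 : ∫ ω in Z ⁻¹' {z}, h12 ω ∂μ = h1 ω₀ * h2 ω₀ * (μ (Z ⁻¹' {z})).toReal := by
      rw [setIntegral_congr_ae (f := h12) (g := fun ω => h1 ω * h2 ω) hE
          (key.mono fun ω hω _ => hω),
        setIntegral_congr_fun (f := fun ω => h1 ω * h2 ω)
          (g := fun _ => h1 ω₀ * h2 ω₀) hE (fun ω hω => by show h1 ω * h2 ω = h1 ω₀ * h2 ω₀; rw [hc1 ω hω, hc2 ω hω]),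
        setIntegral_const]
      rw [smul_eq_mul, measureReal_def]; ring
    have eq1 := i1 ▸ c1
    have eq2 := i2 ▸ c2
    have eq12 := i12 ▸ c12
    rw [eq1, eq2, eq12]; ring

lemma le_mar {S T : Type*} [Fintype S] [DecidableEq T]
    (g : S → T) (p : S → ℝ) (hp : ∀ s, 0 ≤ p s) (s : S) : p s ≤ mar g p (g s) :=
  Finset.single_le_sum (fun i _ => hp i)
    (Finset.mem_filter.mpr ⟨Finset.mem_univ s, rfl⟩)

lemma core {Ω : Type*} [mΩ : MeasurableSpace Ω] [StandardBorelSpace Ω]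
    (μ : Measure Ω) [IsProbabilityMeasure μ]
    {A B C D : Type*} [Fintype A] [Fintype B] [Fintype C] [Fintype D]
    [MeasurableSpace A] [MeasurableSpace B] [MeasurableSpace C] [MeasurableSpace D]
    [MeasurableSingletonClass A] [MeasurableSingletonClass B]
    [MeasurableSingletonClass C] [MeasurableSingletonClass D]
    {fA : Ω → A} {fB : Ω → B} {fC : Ω → C} {fD : Ω → D}
    (hA : Measurable fA) (hB : Measurable fB) (hC : Measurable fC) (hD : Measurable fD)
    (hCI : CondIndepFun (MeasurableSpace.comap (fun ω => (fA ω, fC ω)) inferInstance)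
      ((hA.prodMk hC).comap_le) fB fD μ) :
    shEnt μ (fun ω => (fA ω, (fB ω, fC ω))) + shEnt μ (fun ω => (fA ω, (fC ω, fD ω)))
      = shEnt μ (fun ω => (fA ω, (fB ω, (fC ω, fD ω)))) + shEnt μ (fun ω => (fA ω, fC ω)) := by
  classical
  have hX : Measurable (fun ω => (fA ω, (fB ω, (fC ω, fD ω)))) :=
    hA.prodMk (hB.prodMk (hC.prodMk hD))
  set p : A × (B × (C × D)) → ℝ :=
    fun s => (μ ((fun ω => (fA ω, (fB ω, (fC ω, fD ω)))) ⁻¹' {s})).toReal with hp_def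
  have hpnn : ∀ s, 0 ≤ p s := fun s => ENNReal.toReal_nonneg
  have hK1 : shEnt μ (fun ω => (fA ω, (fB ω, fC ω)))
      = -∑ s, p s * Real.logb 2
          (mar (fun s : A × (B × (C × D)) => (s.1, (s.2.1, s.2.2.1))) p
            (s.1, (s.2.1, s.2.2.1))) :=
    shEnt_comp_eq μ hX (fun s => (s.1, (s.2.1, s.2.2.1)))
  have hK2 : shEnt μ (fun ω => (fA ω, (fC ω, fD ω)))
      = -∑ s, p s * Real.logb 2
          (mar (fun s : A × (B × (C × D)) => (s.1, (s.2.2.1, s.2.2.2))) p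
            (s.1, (s.2.2.1, s.2.2.2))) :=
    shEnt_comp_eq μ hX (fun s => (s.1, (s.2.2.1, s.2.2.2)))
  have hK4 : shEnt μ (fun ω => (fA ω, fC ω))
      = -∑ s, p s * Real.logb 2
          (mar (fun s : A × (B × (C × D)) => (s.1, s.2.2.1)) p (s.1, s.2.2.1)) :=
    shEnt_comp_eq μ hX (fun s => (s.1, s.2.2.1))
  have hK3 : shEnt μ (fun ω => (fA ω, (fB ω, (fC ω, fD ω))))
      = -∑ s, p s * Real.logb 2 (p s) := rfl
  have hCIpt : ∀ s : A × (B × (C × D)),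
      p s * mar (fun s : A × (B × (C × D)) => (s.1, s.2.2.1)) p (s.1, s.2.2.1)
        = mar (fun s : A × (B × (C × D)) => (s.1, (s.2.1, s.2.2.1))) p (s.1, (s.2.1, s.2.2.1))
          * mar (fun s : A × (B × (C × D)) => (s.1, (s.2.2.1, s.2.2.2))) p
              (s.1, (s.2.2.1, s.2.2.2)) := by
    rintro ⟨a, b, c, d⟩
    have h := ci_measure μ (hA.prodMk hC) hB hD hCI
      (measurableSet_singleton b) (measurableSet_singleton d) (a, c)
    have e1 : (fun ω => (fA ω, (fB ω, (fC ω, fD ω)))) ⁻¹' {(a, (b, (c, d)))}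
        = fB ⁻¹' {b} ∩ fD ⁻¹' {d} ∩ (fun ω => (fA ω, fC ω)) ⁻¹' {(a, c)} := by
      ext ω; simp only [Set.mem_preimage, Set.mem_singleton_iff, Set.mem_inter_iff,
        Prod.mk.injEq]
      tauto
    have e2 : (fun ω => (fun s : A × (B × (C × D)) => (s.1, (s.2.1, s.2.2.1)))
          ((fA ω, (fB ω, (fC ω, fD ω))))) ⁻¹' {(a, (b, c))}
        = fB ⁻¹' {b} ∩ (fun ω => (fA ω, fC ω)) ⁻¹' {(a, c)} := by
      ext ω; simp only [Set.mem_preimage, Set.mem_singleton_iff, Set.mem_inter_iff,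
        Prod.mk.injEq]
      tauto
    have e3 : (fun ω => (fun s : A × (B × (C × D)) => (s.1, (s.2.2.1, s.2.2.2)))
          ((fA ω, (fB ω, (fC ω, fD ω))))) ⁻¹' {(a, (c, d))}
        = fD ⁻¹' {d} ∩ (fun ω => (fA ω, fC ω)) ⁻¹' {(a, c)} := by
      ext ω; simp only [Set.mem_preimage, Set.mem_singleton_iff, Set.mem_inter_iff,
        Prod.mk.injEq]
      tauto
    have e4 : (fun ω => (fun s : A × (B × (C × D)) => (s.1, s.2.2.1))
          ((fA ω, (fB ω, (fC ω, fD ω))))) ⁻¹' {(a, c)}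
        = (fun ω => (fA ω, fC ω)) ⁻¹' {(a, c)} := rfl
    have m2 := (mar_eq μ hX (fun s : A × (B × (C × D)) => (s.1, (s.2.1, s.2.2.1)))
      (a, (b, c))).symm
    have m3 := (mar_eq μ hX (fun s : A × (B × (C × D)) => (s.1, (s.2.2.1, s.2.2.2)))
      (a, (c, d))).symm
    have m4 := (mar_eq μ hX (fun s : A × (B × (C × D)) => (s.1, s.2.2.1)) (a, c)).symm
    rw [e2] at m2
    rw [e3] at m3
    rw [e4] at m4
    show p (a, (b, (c, d))) * mar _ p (a, c) = mar _ p (a, (b, c)) * mar _ p (a, (c, d))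
    rw [m2, m3, m4]
    show (μ ((fun ω => (fA ω, (fB ω, (fC ω, fD ω)))) ⁻¹' {(a, (b, (c, d)))})).toReal *
        (μ ((fun ω => (fA ω, fC ω)) ⁻¹' {(a, c)})).toReal = _
    rw [e1]
    exact h
  have pointwise : ∀ s : A × (B × (C × D)),
      p s * Real.logb 2
          (mar (fun s : A × (B × (C × D)) => (s.1, (s.2.1, s.2.2.1))) p (s.1, (s.2.1, s.2.2.1)))
        + p s * Real.logb 2
          (mar (fun s : A × (B × (C × D)) => (s.1, (s.2.2.1, s.2.2.2))) p
            (s.1, (s.2.2.1, s.2.2.2)))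
      = p s * Real.logb 2 (p s)
        + p s * Real.logb 2
            (mar (fun s : A × (B × (C × D)) => (s.1, s.2.2.1)) p (s.1, s.2.2.1)) := by
    intro s
    by_cases h0 : p s = 0
    · simp [h0]
    · have hps : 0 < p s := lt_of_le_of_ne (hpnn s) (Ne.symm h0)
      have hABC : 0 < mar (fun s : A × (B × (C × D)) => (s.1, (s.2.1, s.2.2.1))) p
          (s.1, (s.2.1, s.2.2.1)) :=
        lt_of_lt_of_le hps (le_mar _ p hpnn s)
      have hACD : 0 < mar (fun s : A × (B × (C × D)) => (s.1, (s.2.2.1, s.2.2.2))) p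
          (s.1, (s.2.2.1, s.2.2.2)) :=
        lt_of_lt_of_le hps (le_mar _ p hpnn s)
      have hAC : 0 < mar (fun s : A × (B × (C × D)) => (s.1, s.2.2.1)) p (s.1, s.2.2.1) :=
        lt_of_lt_of_le hps (le_mar _ p hpnn s)
      have hlog := congrArg (Real.logb 2) (hCIpt s)
      rw [Real.logb_mul h0 (ne_of_gt hAC), Real.logb_mul (ne_of_gt hABC) (ne_of_gt hACD)]
        at hlog
      linear_combination (-(p s)) * hlog
  rw [hK1, hK2, hK3, hK4, ← neg_add, ← neg_add, ← Finset.sum_add_distrib,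
    ← Finset.sum_add_distrib, neg_inj]
  exact Finset.sum_congr rfl fun s _ => pointwise s


lemma restr_meas_any {A E : Type*} [Fintype A] [MeasurableSpace A] [MeasurableSingletonClass A]
    [MeasurableSpace E] (r : A → E) : Measurable r :=
  fun _ _ => (Set.toFinite _).measurableSet

lemma step {Ω : Type*} [mΩ : MeasurableSpace Ω] [StandardBorelSpace Ω]
    (μ : Measure Ω) [IsProbabilityMeasure μ]
    {A B' C D E : Type*} [Fintype A] [Fintype B'] [Fintype C] [Fintype D] [Fintype E]
    [MeasurableSpace A] [MeasurableSpace B'] [MeasurableSpace C] [MeasurableSpace D]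
    [MeasurableSpace E]
    [MeasurableSingletonClass A] [MeasurableSingletonClass B']
    [MeasurableSingletonClass C] [MeasurableSingletonClass D] [MeasurableSingletonClass E]
    {fA : Ω → A} {fB' : Ω → B'} {fC : Ω → C} {fD : Ω → D} (r : A → E)
    (hA : Measurable fA) (hB' : Measurable fB') (hC : Measurable fC) (hD : Measurable fD)
    (hCI : CondIndepFun (MeasurableSpace.comap (fun ω => (fA ω, fC ω)) inferInstance)
      ((hA.prodMk hC).comap_le) (fun ω => (fB' ω, r (fA ω))) fD μ) :
    condMutInf μ fA fD (fun ω => (fC ω, fB' ω))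
      = condMutInf μ fA fD fC - condMutInf μ fB' fD fC := by
  classical
  have hB : Measurable (fun ω => (fB' ω, r (fA ω))) :=
    hB'.prodMk ((restr_meas_any r).comp hA)
  have hcore : shEnt μ (fun ω => (fA ω, ((fB' ω, r (fA ω)), fC ω)))
        + shEnt μ (fun ω => (fA ω, (fC ω, fD ω)))
      = shEnt μ (fun ω => (fA ω, ((fB' ω, r (fA ω)), (fC ω, fD ω))))
        + shEnt μ (fun ω => (fA ω, fC ω)) :=
    core μ hA hB hC hD hCI
  have inj1 : Function.Injective
      (fun s : A × (C × B') => (s.1, ((s.2.2, r s.1), s.2.1))) := by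
    rintro ⟨a, c, b⟩ ⟨a', c', b'⟩ h
    simp only [Prod.mk.injEq] at h
    obtain ⟨h1, ⟨h2, -⟩, h3⟩ := h
    simp_all
  have e1 : shEnt μ (fun ω => (fA ω, ((fB' ω, r (fA ω)), fC ω)))
      = shEnt μ (fun ω => (fA ω, (fC ω, fB' ω))) :=
    shEnt_comp_inj μ (fun s : A × (C × B') => (s.1, ((s.2.2, r s.1), s.2.1))) inj1
      (fun ω => (fA ω, (fC ω, fB' ω)))
  have inj2 : Function.Injective
      (fun s : B' × (D × C) => (s.2.1, (s.2.2, s.1))) := by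
    rintro ⟨b, d, c⟩ ⟨b', d', c'⟩ h
    simp only [Prod.mk.injEq] at h
    simp_all
  have e2 : shEnt μ (fun ω => (fD ω, (fC ω, fB' ω)))
      = shEnt μ (fun ω => (fB' ω, (fD ω, fC ω))) :=
    shEnt_comp_inj μ (fun s : B' × (D × C) => (s.2.1, (s.2.2, s.1))) inj2
      (fun ω => (fB' ω, (fD ω, fC ω)))
  have inj3 : Function.Injective
      (fun s : A × (D × (C × B')) => (s.1, ((s.2.2.2, r s.1), (s.2.2.1, s.2.1)))) := by
    rintro ⟨a, d, c, b⟩ ⟨a', d', c', b'⟩ h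
    simp only [Prod.mk.injEq] at h
    obtain ⟨h1, ⟨h2, -⟩, h3, h4⟩ := h
    simp_all
  have e3 : shEnt μ (fun ω => (fA ω, ((fB' ω, r (fA ω)), (fC ω, fD ω))))
      = shEnt μ (fun ω => (fA ω, (fD ω, (fC ω, fB' ω)))) :=
    shEnt_comp_inj μ (fun s : A × (D × (C × B')) => (s.1, ((s.2.2.2, r s.1), (s.2.2.1, s.2.1))))
      inj3 (fun ω => (fA ω, (fD ω, (fC ω, fB' ω))))
  have inj4 : Function.Injective (fun s : C × B' => (s.2, s.1)) := by
    rintro ⟨c, b⟩ ⟨c', b'⟩ h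
    simp only [Prod.mk.injEq] at h
    simp_all
  have e4 : shEnt μ (fun ω => (fB' ω, fC ω)) = shEnt μ (fun ω => (fC ω, fB' ω)) :=
    shEnt_comp_inj μ (fun s : C × B' => (s.2, s.1)) inj4 (fun ω => (fC ω, fB' ω))
  have inj5 : Function.Injective (fun s : A × (D × C) => (s.1, (s.2.2, s.2.1))) := by
    rintro ⟨a, d, c⟩ ⟨a', d', c'⟩ h
    simp only [Prod.mk.injEq] at h
    simp_all
  have e5 : shEnt μ (fun ω => (fA ω, (fC ω, fD ω)))
      = shEnt μ (fun ω => (fA ω, (fD ω, fC ω))) :=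
    shEnt_comp_inj μ (fun s : A × (D × C) => (s.1, (s.2.2, s.2.1))) inj5
      (fun ω => (fA ω, (fD ω, fC ω)))
  simp only [condMutInf]
  linarith [hcore, e1, e2, e3, e4, e5]

def restrHist {α : ℕ → Type*} {t : ℕ} (a : (i : Fin (t + 1)) → α i) (i : Fin t) : α i :=
  a ⟨i.1, Nat.lt_succ_of_lt i.2⟩

/-- Difference form of the causally conditioned directed information: if for every `t` the pair
`(y^t, x^{t-1})` is conditionally independent of `w_t` given `(x^t, w^{t-1})`, then
`I(x^T → w^T ‖ y^T) = I(x^T → w^T) − I(y^T → w^T)`. -/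
theorem causallyConditioned_directedInfo_difference_form
    {Ω : Type*} [MeasurableSpace Ω] [StandardBorelSpace Ω]
    (μ : Measure Ω) [IsProbabilityMeasure μ]
    (T : ℕ) {α β γ : ℕ → Type*}
    [∀ t, Fintype (α t)] [∀ t, Fintype (β t)] [∀ t, Fintype (γ t)]
    [∀ t, MeasurableSpace (α t)] [∀ t, MeasurableSpace (β t)] [∀ t, MeasurableSpace (γ t)]
    [∀ t, MeasurableSingletonClass (α t)] [∀ t, MeasurableSingletonClass (β t)]
    [∀ t, MeasurableSingletonClass (γ t)]
    (x : (t : ℕ) → Ω → α t) (y : (t : ℕ) → Ω → β t) (w : (t : ℕ) → Ω → γ t)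
    (hx : ∀ t, Measurable (x t)) (hy : ∀ t, Measurable (y t)) (hw : ∀ t, Measurable (w t))
    (hMarkov : ∀ t < T,
      CondIndepFun
        (MeasurableSpace.comap (fun ω => (hist x (t + 1) ω, hist w t ω)) inferInstance)
        (((hist_measurable x hx (t + 1)).prodMk (hist_measurable w hw t)).comap_le)
        (fun ω => (hist y (t + 1) ω, hist x t ω)) (w t) μ) :
    ∑ t ∈ range T,
        condMutInf μ (hist x (t + 1)) (w t) (fun ω => (hist w t ω, hist y (t + 1) ω))
      = ∑ t ∈ range T, condMutInf μ (hist x (t + 1)) (w t) (hist w t)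
        - ∑ t ∈ range T, condMutInf μ (hist y (t + 1)) (w t) (hist w t) := by
  rw [← Finset.sum_sub_distrib]
  refine Finset.sum_congr rfl fun t ht => ?_
  exact step μ (restrHist (α := fun i => α i))
    (hist_measurable x hx (t + 1)) (hist_measurable y hy (t + 1))
    (hist_measurable w hw t) (hw t)
    (hMarkov t (Finset.mem_range.mp ht))
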